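/- Let R = ℤ[w,z]/(w² - 2w, wz - 2w). Under the ring homomorphism R → ℤ[θ, θ⁻¹] determined by w ↦ 0 and z ↦ 2 - (θ + θ⁻¹), an element y ∈ R satisfies φ(y) = 0 if and only if y = c·w for some c ∈ ℤ. -/

import Mathlib

open MvPolynomial

noncomputable def SWFIdeal : Ideal (MvPolynomial (Fin 2) ℤ) :=
  Ideal.span {(X 0 : MvPolynomial (Fin 2) ℤ) ^ 2 - 2 * X 0,
    (X 0 : MvPolynomial (Fin 2) ℤ) * X 1 - 2 * X 0}

abbrev SWFRing : Type := MvPolynomial (Fin 2) ℤ ⧸ SWFIdeal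

noncomputable def w : SWFRing := Ideal.Quotient.mk SWFIdeal (X 0)
noncomputable def z : SWFRing := Ideal.Quotient.mk SWFIdeal (X 1)

lemma w_mul_w : w * w = 2 * w := by
  have : Ideal.Quotient.mk SWFIdeal ((X 0 : MvPolynomial (Fin 2) ℤ)^2 - 2 * X 0) = 0 := by
    rw [Ideal.Quotient.eq_zero_iff_mem]
    exact Ideal.subset_span (by simp)
  rw [map_sub] at this
  have h := sub_eq_zero.mp this
  have h2 : (Ideal.Quotient.mk SWFIdeal) (2 : MvPolynomial (Fin 2) ℤ) = 2 := map_ofNat _ 2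
  simpa [w, sq, map_mul, map_pow, h2] using h

lemma w_mul_z : w * z = 2 * w := by
  have : Ideal.Quotient.mk SWFIdeal ((X 0 : MvPolynomial (Fin 2) ℤ) * X 1 - 2 * X 0) = 0 := by
    rw [Ideal.Quotient.eq_zero_iff_mem]
    exact Ideal.subset_span (by simp)
  rw [map_sub] at this
  have h := sub_eq_zero.mp this
  have h2 : (Ideal.Quotient.mk SWFIdeal) (2 : MvPolynomial (Fin 2) ℤ) = 2 := map_ofNat _ 2
  simpa [w, z, map_mul, h2] using h


lemma z_mul_w : z * w = 2 * w := by rw [mul_comm, w_mul_z]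

lemma aeval_z_mul_w (q : Polynomial ℤ) :
    (Polynomial.aeval z q) * w = ((Polynomial.eval 2 q : ℤ) : SWFRing) * w := by
  induction q using Polynomial.induction_on with
  | C a => simp [mul_comm]
  | add p q hp hq =>
      rw [map_add, add_mul, hp, hq, Polynomial.eval_add]; push_cast; ring
  | monomial n a h =>
      have lhs : (Polynomial.aeval z) (Polynomial.C a * Polynomial.X ^ (n+1)) * w
          = 2 * ((Polynomial.aeval z) (Polynomial.C a * Polynomial.X ^ n) * w) := by
        rw [map_mul, map_mul, map_pow, map_pow, Polynomial.aeval_X, pow_succ,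
          mul_assoc, mul_assoc, z_mul_w]
        ring
      rw [lhs, h]
      simp only [Polynomial.eval_mul, Polynomial.eval_pow, Polynomial.eval_C,
        Polynomial.eval_X]
      push_cast
      ring

lemma decomp (y : SWFRing) : ∃ q : Polynomial ℤ, ∃ c : ℤ,
    y = Polynomial.aeval z q + (c : SWFRing) * w := by
  obtain ⟨p, rfl⟩ := Ideal.Quotient.mk_surjective (I := SWFIdeal) y
  induction p using MvPolynomial.induction_on with
  | C a =>
      refine ⟨Polynomial.C a, 0, ?_⟩
      have h1 : (MvPolynomial.C a : MvPolynomial (Fin 2) ℤ) = (a : MvPolynomial (Fin 2) ℤ) := by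
        simp
      rw [h1, map_intCast, Polynomial.aeval_C, eq_intCast (algebraMap ℤ SWFRing)]
      simp
  | add p r hp hr =>
      obtain ⟨q1, c1, h1⟩ := hp
      obtain ⟨q2, c2, h2⟩ := hr
      exact ⟨q1 + q2, c1 + c2, by rw [map_add, h1, h2, map_add]; push_cast; ring⟩
  | mul_X p i hp =>
      obtain ⟨q, c, h⟩ := hp
      rw [map_mul, h]
      fin_cases i <;> simp only [Fin.zero_eta, Fin.mk_one, Fin.isValue]
      · refine ⟨0, Polynomial.eval 2 q + 2 * c, ?_⟩
        show ((Polynomial.aeval z) q + (c : SWFRing) * w) * w = _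
        rw [add_mul, aeval_z_mul_w, mul_assoc, w_mul_w, map_zero]
        push_cast; ring
      · refine ⟨q * Polynomial.X, 2 * c, ?_⟩
        show ((Polynomial.aeval z) q + (c : SWFRing) * w) * z = _
        rw [add_mul, mul_assoc, w_mul_z, map_mul, Polynomial.aeval_X]
        push_cast; ring

section Laurent
open LaurentPolynomial

noncomputable abbrev tL : LaurentPolynomial ℤ := 2 - (T 1 + T (-1))
noncomputable abbrev p0 : Polynomial ℤ := 2 * Polynomial.X - Polynomial.X ^ 2 - 1

lemma T_one_mul_t : T 1 * tL = Polynomial.toLaurent p0 := by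
  have h0 : (T 1 : LaurentPolynomial ℤ) * T (-1) = 1 := by
    rw [← T_add]; norm_num [T_zero]
  have expand : T 1 * tL = 2 * T 1 - T 1 * T 1 - T 1 * T (-1) := by unfold tL; ring
  simp only [p0, map_sub, map_mul, map_pow, map_one, Polynomial.toLaurent_X, map_ofNat]
  rw [expand, h0, ← sq]

lemma p0_eval_zero : p0.eval 0 = -1 := by simp [p0]

lemma Tn_mul_t_pow (n i : ℕ) (h : i ≤ n) :
    T (n : ℤ) * tL ^ i = Polynomial.toLaurent ((Polynomial.X : Polynomial ℤ) ^ (n - i) * p0 ^ i) := by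
  have hsplit : ((n : ℤ)) = ((n - i : ℕ) : ℤ) + (i : ℤ) := by omega
  rw [hsplit, T_add, mul_assoc]
  have hT : (T ((i : ℕ) : ℤ) : LaurentPolynomial ℤ) = T 1 ^ i := by
    rw [T_pow, mul_one]
  rw [hT, ← mul_pow, T_one_mul_t, map_mul, Polynomial.toLaurent_X_pow, ← map_pow]

lemma key (q : Polynomial ℤ) (hq : Polynomial.eval₂ (Int.castRingHom _) tL q = 0) :
    q = 0 := by
  by_contra hne
  set n := q.natDegree with hn
  have h1 : T (n : ℤ) * Polynomial.eval₂ (Int.castRingHom _) tL q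
      = Polynomial.toLaurent (∑ i ∈ Finset.range (n + 1),
          Polynomial.C (q.coeff i) * ((Polynomial.X : Polynomial ℤ) ^ (n - i) * p0 ^ i)) := by
    rw [Polynomial.eval₂_eq_sum_range, Finset.mul_sum, map_sum]
    refine Finset.sum_congr rfl fun i hi => ?_
    have hi' : i ≤ n := Nat.lt_succ_iff.mp (Finset.mem_range.mp hi)
    rw [map_mul, ← Tn_mul_t_pow n i hi', Polynomial.toLaurent_C, eq_intCast,
      eq_intCast]
    ring
  rw [hq, mul_zero] at h1
  have h2 : (∑ i ∈ Finset.range (n + 1),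
      Polynomial.C (q.coeff i) * ((Polynomial.X : Polynomial ℤ) ^ (n - i) * p0 ^ i)) = 0 :=
    Polynomial.toLaurent_injective (by rw [← h1, map_zero])
  have h3 := congrArg (Polynomial.eval 0) h2
  rw [Polynomial.eval_finset_sum] at h3
  rw [Finset.sum_eq_single n] at h3
  · rw [Nat.sub_self, pow_zero, one_mul, Polynomial.eval_mul, Polynomial.eval_C,
      Polynomial.eval_pow, p0_eval_zero, Polynomial.eval_zero] at h3
    simp at h3
    exact hne (Polynomial.leadingCoeff_eq_zero.mp h3)
  · intro i hi hne'
    have hpos : n - i ≠ 0 := by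
      have := Nat.lt_succ_iff.mp (Finset.mem_range.mp hi); omega
    simp only [Polynomial.eval_mul, Polynomial.eval_pow, Polynomial.eval_C,
      Polynomial.eval_X, zero_pow hpos]
    ring
  · intro h; exact absurd (Finset.self_mem_range_succ n) h

end Laurent

lemma phi_aeval (φ : SWFRing →+* LaurentPolynomial ℤ)
    (hz : φ z = 2 - (LaurentPolynomial.T 1 + LaurentPolynomial.T (-1)))
    (q : Polynomial ℤ) :
    φ (Polynomial.aeval z q) = Polynomial.eval₂ (Int.castRingHom _) tL q := by
  rw [Polynomial.aeval_def, Polynomial.hom_eval₂, hz]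
  congr 1
  exact Subsingleton.elim _ _

/-- Under the ring homomorphism `R → ℤ[θ,θ⁻¹]` with `w ↦ 0`,
`z ↦ 2 - (θ + θ⁻¹)`, an element `y` maps to `0` iff `y = c·w` for some `c ∈ ℤ`. -/
theorem stmt_6 (φ : SWFRing →+* LaurentPolynomial ℤ) (hw : φ w = 0)
    (hz : φ z = 2 - (LaurentPolynomial.T 1 + LaurentPolynomial.T (-1)))
    (y : SWFRing) :
    φ y = 0 ↔ ∃ c : ℤ, y = (c : SWFRing) * w := by
  constructor
  · intro h0
    obtain ⟨q, c, rfl⟩ := decomp y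
    refine ⟨c, ?_⟩
    rw [map_add, map_mul, hw, mul_zero, add_zero, phi_aeval φ hz] at h0
    rw [key q h0, map_zero, zero_add]
  · rintro ⟨c, rfl⟩
    rw [map_mul, hw, mul_zero]
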